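/- Suppose f : A^n → B depends on all of its n variables (A finite, |A| ≥ 2). For every m with 0 ≤ m ≤ n − 3: gap f = n − m if and only if qa f = m. -/

import Mathlib

/-- Variable `i` is essential in `f`. -/
def EssAt {A B : Type*} {n : ℕ} (f : (Fin n → A) → B) (i : Fin n) : Prop :=
  ∃ a b : Fin n → A, (∀ j, j ≠ i → a j = b j) ∧ f a ≠ f b

/-- The essential arity of `f`: the number of essential variables. -/
noncomputable def essArity {A B : Type*} {n : ℕ} (f : (Fin n → A) → B) : ℕ :=
  Set.ncard {i : Fin n | EssAt f i}

/-- `A^n_=`: tuples with at least two equal coordinates (all of `A` when `n = 1`). -/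
def Aneq (A : Type*) (n : ℕ) : Set (Fin n → A) :=
  {a | n = 1 ∨ ∃ i j : Fin n, i ≠ j ∧ a i = a j}

/-- Variable `i` is essential in the restriction of `f` to `S` (witnesses must lie in `S`). -/
def EssAtOn {A B : Type*} {n : ℕ} (f : (Fin n → A) → B) (S : Set (Fin n → A)) (i : Fin n) : Prop :=
  ∃ a b : Fin n → A, a ∈ S ∧ b ∈ S ∧ (∀ j, j ≠ i → a j = b j) ∧ f a ≠ f b

/-- Essential arity of the restriction of `f` to `S`. -/
noncomputable def essArityOn {A B : Type*} {n : ℕ} (f : (Fin n → A) → B)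
    (S : Set (Fin n → A)) : ℕ :=
  Set.ncard {i : Fin n | EssAtOn f S i}

/-- `g` is a support of `f`: they agree on `A^n_=`. -/
def IsSupport {A B : Type*} {n : ℕ} (f g : (Fin n → A) → B) : Prop :=
  ∀ a ∈ Aneq A n, g a = f a

/-- The quasi-arity of `f`: minimum essential arity of a support of `f`. -/
noncomputable def qarity {A B : Type*} {n : ℕ} (f : (Fin n → A) → B) : ℕ :=
  sInf {m | ∃ g : (Fin n → A) → B, IsSupport f g ∧ essArity g = m}

/-- The variable identification minor `f_{i ← j}`: substitute `x_j` for `x_i`. -/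
def idMinor {A B : Type*} {n : ℕ} (f : (Fin n → A) → B) (i j : Fin n) :
    (Fin n → A) → B :=
  fun a => f (Function.update a i (a j))

/-- The arity gap of `f`: minimum of `ess f - ess f_{i←j}` over pairs of distinct
essential variables. -/
noncomputable def arityGap {A B : Type*} {n : ℕ} (f : (Fin n → A) → B) : ℕ :=
  sInf {d | ∃ i j : Fin n, i ≠ j ∧ EssAt f i ∧ EssAt f j ∧
    d = essArity f - essArity (idMinor f i j)}

section Lemmas
variable {A B : Type*} {n : ℕ}

lemma not_essAt_iff (f : (Fin n → A) → B) (i : Fin n) :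
    ¬ EssAt f i ↔ ∀ a b : Fin n → A, (∀ j, j ≠ i → a j = b j) → f a = f b := by
  unfold EssAt; push_neg; tauto

lemma not_essAtOn_iff (f : (Fin n → A) → B) (S : Set (Fin n → A)) (i : Fin n) :
    ¬ EssAtOn f S i ↔
      ∀ a b : Fin n → A, a ∈ S → b ∈ S → (∀ j, j ≠ i → a j = b j) → f a = f b := by
  unfold EssAtOn; push_neg; tauto

lemma essArity_le_card (f : (Fin n → A) → B) : essArity f ≤ n := by
  have h := Set.ncard_le_ncard (Set.subset_univ {i : Fin n | EssAt f i}) (Set.toFinite _)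
  simpa [essArity, Set.ncard_univ] using h

lemma essArity_eq_of_dep (f : (Fin n → A) → B) (hdep : ∀ i, EssAt f i) :
    essArity f = n := by
  have : {i : Fin n | EssAt f i} = Set.univ := by
    ext i; simp [hdep i]
  simp [essArity, this, Set.ncard_univ]

lemma not_essAt_idMinor_self (g : (Fin n → A) → B) {i j : Fin n} (hij : i ≠ j) :
    ¬ EssAt (idMinor g i j) i := by
  rw [not_essAt_iff]
  intro a b hab
  unfold idMinor
  congr 1
  funext k
  rcases eq_or_ne k i with rfl | hk
  · simp [Function.update_self, hab j (Ne.symm hij)]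
  · simp [Function.update_of_ne hk, hab k hk]

lemma essAt_idMinor_other (g : (Fin n → A) → B) {i j k : Fin n}
    (hki : k ≠ i) (hkj : k ≠ j) (h : EssAt (idMinor g i j) k) : EssAt g k := by
  obtain ⟨a, b, hab, hne⟩ := h
  refine ⟨Function.update a i (a j), Function.update b i (b j), ?_, hne⟩
  intro l hl
  rcases eq_or_ne l i with rfl | hli
  · simp [Function.update_self, hab j hkj.symm]
  · simp [Function.update_of_ne hli, hab l hl]

lemma essAt_idMinor_j (g : (Fin n → A) → B) {i j : Fin n} (hij : i ≠ j)
    (h : EssAt (idMinor g i j) j) : EssAt g i ∨ EssAt g j := by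
  by_contra hcon
  push_neg at hcon
  obtain ⟨hi, hj⟩ := hcon
  rw [not_essAt_iff] at hi hj
  obtain ⟨a, b, hab, hne⟩ := h
  apply hne
  have h1 : g (Function.update a i (a j)) =
      g (Function.update (Function.update a i (a j)) j (b j)) := by
    apply hj
    intro l hl
    simp [Function.update_of_ne hl]
  have h2 : g (Function.update (Function.update a i (a j)) j (b j)) =
      g (Function.update b i (b j)) := by
    apply hi
    intro l hl
    rcases eq_or_ne l j with rfl | hlj
    · simp [Function.update_self, Function.update_of_ne hij.symm]
    · simp [Function.update_of_ne hlj, Function.update_of_ne hl,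
        Function.update_of_ne hij.symm]
      exact hab l hlj
  exact h1.trans h2

lemma essArity_idMinor_le (g : (Fin n → A) → B) {i j : Fin n} (hij : i ≠ j) :
    essArity (idMinor g i j) ≤ essArity g := by
  classical
  set Em := {k : Fin n | EssAt (idMinor g i j) k} with hEm
  set Eg := {k : Fin n | EssAt g k} with hEg
  by_cases hj : EssAt g j
  · have hsub : Em ⊆ Eg := by
      intro k hk
      rcases eq_or_ne k j with rfl | hkj
      · exact hj
      · have hki : k ≠ i := by
          intro h; exact (not_essAt_idMinor_self g hij) (by rwa [h] at hk)
        exact essAt_idMinor_other g hki hkj hk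
    exact Set.ncard_le_ncard hsub (Set.toFinite _)
  · by_cases hjm : EssAt (idMinor g i j) j
    · have hi : EssAt g i := (essAt_idMinor_j g hij hjm).resolve_right hj
      have hsub : Em ⊆ (Eg \ {i}) ∪ {j} := by
        intro k hk
        rcases eq_or_ne k j with rfl | hkj
        · exact Or.inr rfl
        · left
          have hki : k ≠ i := by
            intro h; exact (not_essAt_idMinor_self g hij) (by rwa [h] at hk)
          exact ⟨essAt_idMinor_other g hki hkj hk, hki⟩
      calc Set.ncard Em ≤ Set.ncard ((Eg \ {i}) ∪ {j}) :=
              Set.ncard_le_ncard hsub (Set.toFinite _)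
        _ ≤ Set.ncard (Eg \ {i}) + Set.ncard ({j} : Set (Fin n)) :=
              Set.ncard_union_le _ _
        _ = Set.ncard (Eg \ {i}) + 1 := by rw [Set.ncard_singleton]
        _ = Set.ncard Eg :=
              Set.ncard_diff_singleton_add_one (show i ∈ Eg from hi) (Set.toFinite _)
    · have hsub : Em ⊆ Eg := by
        intro k hk
        have hki : k ≠ i := by
          intro h; exact (not_essAt_idMinor_self g hij) (by rwa [h] at hk)
        have hkj : k ≠ j := by
          intro h; exact hjm (by rwa [h] at hk)
        exact essAt_idMinor_other g hki hkj hk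
      exact Set.ncard_le_ncard hsub (Set.toFinite _)

lemma update_mem_aneq (a : Fin n → A) {i j : Fin n} (hij : i ≠ j) :
    Function.update a i (a j) ∈ Aneq A n := by
  right
  refine ⟨i, j, hij, ?_⟩
  simp [Function.update_self, Function.update_of_ne (Ne.symm hij)]

lemma idMinor_eq_of_support {f g : (Fin n → A) → B} (hg : IsSupport f g)
    {i j : Fin n} (hij : i ≠ j) : idMinor f i j = idMinor g i j := by
  funext a
  exact (hg _ (update_mem_aneq a hij)).symm

lemma idMinor_eq_self_of_not_essAt (g : (Fin n → A) → B) {i : Fin n} (j : Fin n)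
    (hi : ¬ EssAt g i) : idMinor g i j = g := by
  rw [not_essAt_iff] at hi
  funext a
  exact hi _ _ (fun l hl => Function.update_of_ne hl _ _)

lemma qarity_mem (f : (Fin n → A) → B) :
    ∃ g : (Fin n → A) → B, IsSupport f g ∧ essArity g = qarity f := by
  have hne : {m | ∃ g : (Fin n → A) → B, IsSupport f g ∧ essArity g = m}.Nonempty :=
    ⟨essArity f, f, fun a _ => rfl, rfl⟩
  exact Nat.sInf_mem hne

lemma qarity_le (f g : (Fin n → A) → B) (hg : IsSupport f g) :
    qarity f ≤ essArity g :=
  Nat.sInf_le ⟨g, hg, rfl⟩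

/-- P1 : every identification minor has essential arity at most the quasi-arity. -/
lemma minor_le_qarity (f : (Fin n → A) → B) {i j : Fin n} (hij : i ≠ j) :
    essArity (idMinor f i j) ≤ qarity f := by
  obtain ⟨g, hg, hge⟩ := qarity_mem f
  rw [idMinor_eq_of_support hg hij]
  exact le_trans (essArity_idMinor_le g hij) (le_of_eq hge)

/-- P2 : if the quasi-arity is `< n`, some identification minor attains it. -/
lemma exists_minor_eq_qarity (f : (Fin n → A) → B) (hn : 2 ≤ n)
    (hq : qarity f < n) : ∃ i j : Fin n, i ≠ j ∧ essArity (idMinor f i j) = qarity f := by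
  obtain ⟨g, hg, hge⟩ := qarity_mem f
  have hlt : Set.ncard {i : Fin n | EssAt g i} < n := by
    rw [essArity] at hge; omega
  have hex : ∃ i : Fin n, ¬ EssAt g i := by
    by_contra hcon
    push_neg at hcon
    have : {i : Fin n | EssAt g i} = Set.univ := by ext i; simp [hcon i]
    rw [this, Set.ncard_univ] at hlt
    simp at hlt
  obtain ⟨i, hi⟩ := hex
  have hcard : 1 < Fintype.card (Fin n) := by simp; omega
  obtain ⟨j, hj⟩ := Fintype.exists_ne_of_one_lt_card hcard i
  refine ⟨i, j, Ne.symm hj, ?_⟩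
  rw [idMinor_eq_of_support hg (Ne.symm hj), idMinor_eq_self_of_not_essAt g j hi, hge]

end Lemmas

section Semantic
variable {A B : Type*} {n : ℕ} (f : (Fin n → A) → B)

/-- The slice-essentiality relation: variable `k` is essential "within the slice x_r = x_s". -/
def Xp (k r s : Fin n) : Prop :=
  ∃ a b : Fin n → A, a r = a s ∧ (∀ j, j ≠ k → a j = b j) ∧ f a ≠ f b

variable {f}

lemma Xp_symm {k r s : Fin n} (h : Xp f k r s) : Xp f k s r := by
  obtain ⟨a, b, h1, h2, h3⟩ := h
  exact ⟨a, b, h1.symm, h2, h3⟩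

/-- The basic chain step: if two tuples differing only at `c` share an equal pair `(p,q)`
and `c` is not slice-essential there, then `f` agrees on them. -/
lemma step {x y : Fin n → A} {c p q : Fin n}
    (hxy : ∀ j, j ≠ c → x j = y j) (hpq : x p = x q)
    (hX : ¬ Xp f c p q) : f x = f y := by
  by_contra hne
  exact hX ⟨x, y, hpq, hxy, hne⟩

lemma Xp_essAt_minor {k r s : Fin n} (hrs : r ≠ s) (hkr : k ≠ r) (hks : k ≠ s)
    (h : Xp f k r s) : EssAt (idMinor f r s) k := by
  obtain ⟨a, b, h1, h2, h3⟩ := h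
  refine ⟨a, b, h2, ?_⟩
  have ha : Function.update a r (a s) = a := by
    rw [← h1]; exact Function.update_eq_self _ _
  have hb : Function.update b r (b s) = b := by
    have hbr : b r = b s := by
      rw [← h2 r (Ne.symm hkr), ← h2 s (Ne.symm hks)]; exact h1
    rw [← hbr]; exact Function.update_eq_self _ _
  unfold idMinor
  rw [ha, hb]
  exact h3

/-- Capacity: at most `n-3` variables are slice-essential on a given slice. -/
lemma Xp_cap (hminor : ∀ i j : Fin n, i ≠ j → essArity (idMinor f i j) ≤ n - 3)
    {r s : Fin n} (hrs : r ≠ s) :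
    Set.ncard {k : Fin n | k ≠ r ∧ k ≠ s ∧ Xp f k r s} ≤ n - 3 := by
  have hsub : {k : Fin n | k ≠ r ∧ k ≠ s ∧ Xp f k r s} ⊆
      {k : Fin n | EssAt (idMinor f r s) k} := by
    rintro k ⟨h1, h2, h3⟩
    exact Xp_essAt_minor hrs h1 h2 h3
  exact le_trans (Set.ncard_le_ncard hsub (Set.toFinite _)) (hminor r s hrs)

lemma card_two_compl {r s : Fin n} (hrs : r ≠ s) :
    Set.ncard {k : Fin n | k ≠ r ∧ k ≠ s} = n - 2 := by
  have h1 : {k : Fin n | k ≠ r ∧ k ≠ s} = Set.univ \ {r, s} := by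
    ext k
    simp only [Set.mem_setOf_eq, Set.mem_diff, Set.mem_univ, true_and,
      Set.mem_insert_iff, Set.mem_singleton_iff]
    tauto
  rw [h1, Set.ncard_diff (by simp) (Set.toFinite _), Set.ncard_univ, Set.ncard_pair hrs]
  simp

/-- Existence of a non-essential outsider on every slice. -/
lemma Nex (hn : 3 ≤ n) (hminor : ∀ i j : Fin n, i ≠ j → essArity (idMinor f i j) ≤ n - 3)
    {r s : Fin n} (hrs : r ≠ s) :
    ∃ z : Fin n, z ≠ r ∧ z ≠ s ∧ ¬ Xp f z r s := by
  by_contra hcon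
  push_neg at hcon
  have heq : {k : Fin n | k ≠ r ∧ k ≠ s ∧ Xp f k r s} = {k : Fin n | k ≠ r ∧ k ≠ s} := by
    ext k
    simp only [Set.mem_setOf_eq]
    exact ⟨fun ⟨a, b, _⟩ => ⟨a, b⟩, fun ⟨a, b⟩ => ⟨a, b, hcon k a b⟩⟩
  have h1 := Xp_cap hminor hrs
  rw [heq, card_two_compl hrs] at h1
  omega

/-- SC : essentiality transfers between slices. -/
lemma SC {k r s t w : Fin n} (h : Xp f k r s) (hkr : k ≠ r) (hks : k ≠ s)
    (htr : t ≠ r) (hts : t ≠ s) (htk : t ≠ k) (hwk : w ≠ k) (hwt : w ≠ t) :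
    Xp f k t w ∨ Xp f t r s := by
  obtain ⟨a, b, h1, h2, h3⟩ := h
  set c := Function.update a t (a w) with hc
  set d := Function.update b t (b w) with hd
  by_cases hcd : f c = f d
  · -- then f a ≠ f c or f b ≠ f d ; both give Xp f t r s
    by_cases hac : f a = f c
    · right
      have hbd : f b ≠ f d := by
        intro hbd
        exact h3 (hac.trans (hcd.trans hbd.symm))
      have hbrs : b r = b s := by
        have e1 : a r = b r := h2 r (Ne.symm hkr)
        have e2 : a s = b s := h2 s (Ne.symm hks)
        rw [← e1, ← e2]; exact h1
      refine ⟨b, d, hbrs, ?_, hbd⟩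
      intro j hj
      rw [hd, Function.update_of_ne hj]
    · right
      refine ⟨a, c, h1, ?_, hac⟩
      intro j hj
      rw [hc, Function.update_of_ne hj]
  · left
    refine ⟨c, d, ?_, ?_, hcd⟩
    · rw [hc]
      rw [Function.update_self, Function.update_of_ne hwt]
    · intro j hj
      rcases eq_or_ne j t with rfl | hjt
      · rw [hc, hd, Function.update_self, Function.update_self, h2 w hwk]
      · rw [hc, hd, Function.update_of_ne hjt, Function.update_of_ne hjt, h2 j hj]

end Semantic

section Coverage
variable {A B : Type*} {n : ℕ} {f : (Fin n → A) → B}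

lemma coverage (hn : 3 ≤ n) {k : Fin n} (hk : EssAtOn f (Aneq A n) k) :
    (∃ r s, r ≠ s ∧ k ≠ r ∧ k ≠ s ∧ Xp f k r s) ∨
    (∃ r s, r ≠ s ∧ k ≠ r ∧ k ≠ s ∧ ∀ t, t ≠ k → t ≠ r → t ≠ s →
      ((Xp f t k r ∨ Xp f t k s ∨ Xp f k t r) ∧
       (Xp f s k r ∨ Xp f k r s ∨ Xp f s k t ∨ Xp f r k t ∨ Xp f r k s))) := by
  obtain ⟨a, b, ha, hb, hab, hne⟩ := hk
  by_cases hcase : ∃ i j : Fin n, i ≠ j ∧ i ≠ k ∧ j ≠ k ∧ a i = a j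
  · obtain ⟨i, j, hij, hik, hjk, haij⟩ := hcase
    exact Or.inl ⟨i, j, hij, Ne.symm hik, Ne.symm hjk, a, b, haij, hab, hne⟩
  · push_neg at hcase
    -- a is injective off k
    have hinj : ∀ i j : Fin n, i ≠ j → i ≠ k → j ≠ k → a i ≠ a j := hcase
    -- extract r with a k = a r
    have har' : ∃ r, r ≠ k ∧ a k = a r := by
      rcases ha with h1 | ⟨i, j, hij, haij⟩
      · omega
      · rcases eq_or_ne i k with rfl | hik
        · exact ⟨j, fun h => hij (h ▸ rfl), haij⟩
        · rcases eq_or_ne j k with rfl | hjk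
          · exact ⟨i, hik, haij.symm⟩
          · exact absurd haij (hinj i j hij hik hjk)
    obtain ⟨r, hrk, har⟩ := har'
    have hbs' : ∃ s, s ≠ k ∧ b k = b s := by
      rcases hb with h1 | ⟨i, j, hij, hbij⟩
      · omega
      · rcases eq_or_ne i k with rfl | hik
        · exact ⟨j, fun h => hij (h ▸ rfl), hbij⟩
        · rcases eq_or_ne j k with rfl | hjk
          · exact ⟨i, hik, hbij.symm⟩
          · exfalso
            have e1 : a i = b i := hab i hik
            have e2 : a j = b j := hab j hjk
            exact hinj i j hij hik hjk (e1.trans (hbij.trans e2.symm))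
    obtain ⟨s, hsk, hbs⟩ := hbs'
    have hrs : r ≠ s := by
      intro h
      subst h
      have e1 : a r = b r := hab r hrk
      have hakbk : a k = b k := by rw [har, e1, ← hbs]
      have : a = b := by
        funext j
        rcases eq_or_ne j k with rfl | hj
        · exact hakbk
        · exact hab j hj
      exact hne (by rw [this])
    have haS : a s = b k := by
      have : a s = b s := hab s hsk
      rw [this, hbs]
    right
    refine ⟨r, s, hrs, Ne.symm hrk, Ne.symm hsk, ?_⟩
    intro t htk htr hts
    constructor
    · -- diamond chain
      by_contra hcon
      push_neg at hcon
      obtain ⟨h1, h23⟩ := hcon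
      obtain ⟨h2, h3⟩ := h23
      set d₁ := Function.update a t (a k) with hd₁
      set d₂ := Function.update d₁ k (b k) with hd₂
      have e1 : f a = f d₁ := by
        refine step (f := f) (c := t) (p := k) (q := r) ?_ har h1
        intro j hj
        rw [hd₁, Function.update_of_ne hj]
      have e2 : f d₁ = f d₂ := by
        refine step (f := f) (c := k) (p := t) (q := r) ?_ ?_ h3
        · intro j hj
          rw [hd₂, Function.update_of_ne hj]
        · rw [hd₁, Function.update_self, Function.update_of_ne (Ne.symm htr), ← har]
      have e3 : f d₂ = f b := by
        refine step (f := f) (c := t) (p := k) (q := s) ?_ ?_ h2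
        · intro j hj
          rcases eq_or_ne j k with rfl | hjk
          · rw [hd₂, Function.update_self]
          · rw [hd₂, Function.update_of_ne hjk, hd₁, Function.update_of_ne hj,
              hab j hjk]
        · rw [hd₂, Function.update_self, Function.update_of_ne hsk, hd₁,
            Function.update_of_ne hts.symm, haS]
      exact hne (e1.trans (e2.trans e3))
    · -- K2-2 chain
      by_contra hcon
      push_neg at hcon
      obtain ⟨g1, g2, g3, g4, g5⟩ := hcon
      set e₁ := Function.update a s (a k) with he₁
      set e₂ := Function.update e₁ k (a t) with he₂
      set e₃ := Function.update e₂ s (b k) with he₃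
      set e₄ := Function.update e₃ r (b k) with he₄
      set e₅ := Function.update e₄ k (b k) with he₅
      have c1 : f a = f e₁ := by
        refine step (f := f) (c := s) (p := k) (q := r) ?_ har g1
        intro j hj
        rw [he₁, Function.update_of_ne hj]
      have c2 : f e₁ = f e₂ := by
        refine step (f := f) (c := k) (p := r) (q := s) ?_ ?_ g2
        · intro j hj
          rw [he₂, Function.update_of_ne hj]
        · rw [he₁, Function.update_of_ne hrs, Function.update_self, ← har]
      have c3 : f e₂ = f e₃ := by
        refine step (f := f) (c := s) (p := k) (q := t) ?_ ?_ g3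
        · intro j hj
          rw [he₃, Function.update_of_ne hj]
        · rw [he₂, Function.update_self, Function.update_of_ne htk,
            he₁, Function.update_of_ne hts]
      have c4 : f e₃ = f e₄ := by
        refine step (f := f) (c := r) (p := k) (q := t) ?_ ?_ g4
        · intro j hj
          rw [he₄, Function.update_of_ne hj]
        · show e₃ k = e₃ t
          simp only [he₃, he₂, he₁, Function.update_apply]
          simp [Ne.symm hsk, htk, hts]
      have c5 : f e₄ = f e₅ := by
        refine step (f := f) (c := k) (p := r) (q := s) ?_ ?_ g2
        · intro j hj
          rw [he₅, Function.update_of_ne hj]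
        · rw [he₄, Function.update_self, Function.update_of_ne hrs.symm,
            he₃, Function.update_self]
      have c6 : f e₅ = f b := by
        refine step (f := f) (c := r) (p := k) (q := s) ?_ ?_ g5
        · intro j hj
          simp only [he₅, he₄, he₃, he₂, he₁, Function.update_apply]
          rcases eq_or_ne j k with rfl | hjk
          · simp
          · rcases eq_or_ne j s with rfl | hjs
            · simp [hsk, Ne.symm hrs, hbs]
            · simp [hjk, hjs, hj, hab j hjk]
        · show e₅ k = e₅ s
          simp only [he₅, he₄, he₃, he₂, he₁, Function.update_apply]
          simp [hsk, Ne.symm hsk, Ne.symm hrs]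
      exact hne (c1.trans (c2.trans (c3.trans (c4.trans (c5.trans c6)))))

end Coverage

section ConstCase
variable {A B : Type*} {n : ℕ} {f : (Fin n → A) → B}

lemma const_of_no_ess {g : (Fin n → A) → B} (h : ∀ i, ¬ EssAt g i) :
    ∀ a b, g a = g b := by
  have key : ∀ (l : List (Fin n)) (a b : Fin n → A),
      (∀ i, i ∉ l → a i = b i) → g a = g b := by
    intro l
    induction l with
    | nil =>
      intro a b hab
      have : a = b := funext fun i => hab i (by simp)
      rw [this]
    | cons i l ih =>
      intro a b hab
      have h1 : g a = g (Function.update a i (b i)) := by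
        by_contra hne
        exact h i ⟨a, Function.update a i (b i), fun j hj =>
          (Function.update_of_ne hj _ _).symm, hne⟩
      rw [h1]
      apply ih
      intro j hj
      rcases eq_or_ne j i with rfl | hji
      · rw [Function.update_self]
      · rw [Function.update_of_ne hji]
        exact hab j (by simp [hj, hji])
  intro a b
  exact key (List.finRange n) a b (fun i hi => absurd (List.mem_finRange i) hi)

lemma core_n3 (hA : Nonempty A) (hn : 3 ≤ n)
    (hminor0 : ∀ i j : Fin n, i ≠ j → essArity (idMinor f i j) = 0) :
    ∀ p : Fin n, ¬ EssAtOn f (Aneq A n) p := by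
  obtain ⟨v⟩ := hA
  -- every minor is constant
  have hconst : ∀ i j : Fin n, i ≠ j → ∀ a b, idMinor f i j a = idMinor f i j b := by
    intro i j hij
    apply const_of_no_ess
    intro ii
    have h0 := hminor0 i j hij
    unfold essArity at h0
    rw [Set.ncard_eq_zero (Set.toFinite _)] at h0
    intro hess
    have : ii ∈ {k : Fin n | EssAt (idMinor f i j) k} := hess
    rw [h0] at this
    exact this
  -- f is constant on the diagonal
  have hdiag : ∀ x ∈ Aneq A n, f x = f (fun _ => v) := by
    intro x hx
    rcases hx with h1 | ⟨i, j, hij, hxij⟩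
    · omega
    · have e1 : f x = idMinor f i j x := by
        unfold idMinor
        rw [← hxij]
        rw [Function.update_eq_self]
      have e2 : idMinor f i j (fun _ => v) = f (fun _ => v) := by
        unfold idMinor
        congr 1
        exact Function.update_eq_self _ _
      rw [e1, hconst i j hij x (fun _ => v), e2]
  intro p ⟨a, b, ha, hb, hab, hne⟩
  exact hne ((hdiag a ha).trans (hdiag b hb).symm)

end ConstCase

section Abstract
variable {A B : Type*} {n : ℕ} {f : (Fin n → A) → B}

def K1 (f : (Fin n → A) → B) (k : Fin n) : Prop :=
  ∃ r s : Fin n, r ≠ s ∧ k ≠ r ∧ k ≠ s ∧ Xp f k r s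

def Cset (f : (Fin n → A) → B) (k : Fin n) : Set (Fin n) :=
  {c : Fin n | c ≠ k ∧ ∀ w, w ≠ k → w ≠ c → Xp f k c w}

def Uset (f : (Fin n → A) → B) (S : Set (Fin n)) : Set (Fin n) :=
  {u : Fin n | ∀ k ∈ S, u ∈ Cset f k}

lemma Cset_ne {k c : Fin n} (h : c ∈ Cset f k) : c ≠ k := h.1

lemma Cset_X {k c w : Fin n} (h : c ∈ Cset f k) (h1 : w ≠ k) (h2 : w ≠ c) :
    Xp f k c w := h.2 w h1 h2

lemma exists_notin₂ (hn : 3 ≤ n) (a b : Fin n) : ∃ w : Fin n, w ≠ a ∧ w ≠ b := by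
  have h1 : (Set.univ \ {a, b} : Set (Fin n)).Nonempty := by
    rw [← Set.ncard_pos (Set.toFinite _)]
    have h2 : Set.ncard ({a, b} : Set (Fin n)) ≤ 2 := by
      apply le_trans (Set.ncard_insert_le _ _)
      simp [Set.ncard_singleton]
    have h3 := Set.ncard_diff (Set.subset_univ ({a, b} : Set (Fin n))) (Set.toFinite _)
    rw [h3, Set.ncard_univ]
    simp only [Nat.card_eq_fintype_card, Fintype.card_fin]
    omega
  obtain ⟨w, hw⟩ := h1
  simp only [Set.mem_diff, Set.mem_univ, true_and, Set.mem_insert_iff,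
    Set.mem_singleton_iff, not_or] at hw
  exact ⟨w, hw.1, hw.2⟩

lemma exists_notin₃ (hn : 4 ≤ n) (a b c : Fin n) :
    ∃ w : Fin n, w ≠ a ∧ w ≠ b ∧ w ≠ c := by
  have h1 : (Set.univ \ {a, b, c} : Set (Fin n)).Nonempty := by
    rw [← Set.ncard_pos (Set.toFinite _)]
    have h2 : Set.ncard ({a, b, c} : Set (Fin n)) ≤ 3 := by
      apply le_trans (Set.ncard_insert_le _ _)
      have := Set.ncard_insert_le b ({c} : Set (Fin n))
      simp only [Set.ncard_singleton] at this ⊢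
      omega
    have h3 := Set.ncard_diff (Set.subset_univ ({a, b, c} : Set (Fin n))) (Set.toFinite _)
    rw [h3, Set.ncard_univ]
    simp only [Nat.card_eq_fintype_card, Fintype.card_fin]
    omega
  obtain ⟨w, hw⟩ := h1
  simp only [Set.mem_diff, Set.mem_univ, true_and, Set.mem_insert_iff,
    Set.mem_singleton_iff, not_or] at hw
  exact ⟨w, hw.1, hw.2.1, hw.2.2⟩

lemma absorb {k r s : Fin n} (h : Xp f k r s) (hrs : r ≠ s) (hkr : k ≠ r) (hks : k ≠ s)
    {z : Fin n} (hzr : z ≠ r) (hzs : z ≠ s) (hzX : ¬ Xp f z r s) : z ∈ Cset f k := by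
  have hzk : z ≠ k := by
    rintro rfl
    exact hzX h
  refine ⟨hzk, ?_⟩
  intro w hwk hwz
  exact (SC h hkr hks hzr hzs hzk hwk hwz).resolve_right hzX

variable (hminor : ∀ i j : Fin n, i ≠ j → essArity (idMinor f i j) ≤ n - 3)

include hminor

lemma rich (hn : 3 ≤ n) {k : Fin n} (h : K1 f k) :
    ∃ c₁ c₂ : Fin n, c₁ ≠ c₂ ∧ c₁ ∈ Cset f k ∧ c₂ ∈ Cset f k := by
  obtain ⟨r, s, hrs, hkr, hks, hX⟩ := h
  obtain ⟨ν₀, h01, h02, h0X⟩ := Nex hn hminor hrs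
  have hν₀ : ν₀ ∈ Cset f k := absorb hX hrs hkr hks h01 h02 h0X
  obtain ⟨w, hwk, hwv⟩ := exists_notin₂ hn k ν₀
  have hX1 : Xp f k ν₀ w := Cset_X hν₀ hwk hwv
  have hνw : ν₀ ≠ w := Ne.symm hwv
  obtain ⟨ν₁, h11, h12, h1X⟩ := Nex hn hminor hνw
  have hν₁ : ν₁ ∈ Cset f k :=
    absorb hX1 hνw (Ne.symm (Cset_ne hν₀)) (Ne.symm hwk) h11 h12 h1X
  exact ⟨ν₁, ν₀, h11, hν₁, hν₀⟩

lemma pairwise_C (hn : 3 ≤ n) {u u' : Fin n} (huu : u ≠ u') (hK : K1 f u) (hK' : K1 f u') :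
    ∃ c, c ∈ Cset f u ∧ c ∈ Cset f u' := by
  by_contra hdis
  push_neg at hdis
  obtain ⟨c₁, c₂, hc12, hc₁, hc₂⟩ := rich hminor hn hK
  obtain ⟨c, hc, hcu'⟩ : ∃ c, c ∈ Cset f u ∧ c ≠ u' := by
    rcases eq_or_ne c₁ u' with rfl | h
    · exact ⟨c₂, hc₂, fun he => hc12 he.symm⟩
    · exact ⟨c₁, hc₁, h⟩
  obtain ⟨d₁, d₂, hd12, hd₁, hd₂⟩ := rich hminor hn hK'
  obtain ⟨d, hd, hdu, hdc⟩ : ∃ d, d ∈ Cset f u' ∧ d ≠ u ∧ d ≠ c := by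
    have hdc₁ : d₁ ≠ c := fun he => hdis c (he ▸ hc) (he ▸ hd₁)
    have hdc₂ : d₂ ≠ c := fun he => hdis c (he ▸ hc) (he ▸ hd₂)
    rcases eq_or_ne d₁ u with rfl | h
    · exact ⟨d₂, hd₂, fun he => hd12 he.symm, hdc₂⟩
    · exact ⟨d₁, hd₁, h, hdc₁⟩
  have hX1 : Xp f u c d := Cset_X hc hdu hdc
  have hX2 : Xp f u' c d := Xp_symm (Cset_X hd hcu' hdc.symm)
  have hcd : c ≠ d := Ne.symm hdc
  obtain ⟨ν, hν1, hν2, hνX⟩ := Nex hn hminor hcd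
  have h1 : ν ∈ Cset f u :=
    absorb hX1 hcd (Ne.symm (Cset_ne hc)) (Ne.symm hdu) hν1 hν2 hνX
  have h2 : ν ∈ Cset f u' :=
    absorb hX2 hcd (Ne.symm hcu') (Ne.symm (Cset_ne hd)) hν1 hν2 hνX
  exact hdis ν h1 h2

end Abstract

lemma attain3 {α : Type*} {u₁ u₂ u₃ kk r s : α} (h12 : u₁ ≠ u₂) (h31 : u₃ ≠ u₁)
    (h32 : u₃ ≠ u₂)
    (e1 : u₁ = kk ∨ u₁ = r ∨ u₁ = s) (e2 : u₂ = kk ∨ u₂ = r ∨ u₂ = s)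
    (e3 : u₃ = kk ∨ u₃ = r ∨ u₃ = s) :
    (r = u₁ ∨ r = u₂ ∨ r = u₃) ∧ (s = u₁ ∨ s = u₂ ∨ s = u₃) := by
  rcases e1 with rfl | rfl | rfl <;> rcases e2 with h2 | rfl | rfl <;>
    rcases e3 with h3 | h3 | h3 <;> simp_all

section Main
variable {A B : Type*} {n : ℕ} {f : (Fin n → A) → B}

def InvS (f : (Fin n → A) → B) (S : Set (Fin n)) : Prop :=
  (∀ k ∈ S, K1 f k) ∧ ∃ u₁ u₂ : Fin n, u₁ ≠ u₂ ∧ u₁ ∈ Uset f S ∧ u₂ ∈ Uset f S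

lemma U_mem_C {S : Set (Fin n)} {u k : Fin n} (hu : u ∈ Uset f S) (hk : k ∈ S) :
    u ∈ Cset f k := hu k hk

lemma S_ne_U {S : Set (Fin n)} {k u : Fin n} (hk : k ∈ S) (hu : u ∈ Uset f S) :
    k ≠ u := Ne.symm (Cset_ne (U_mem_C hu hk))

lemma own_X {S : Set (Fin n)} {k u₁ u₂ : Fin n} (hk : k ∈ S)
    (h1 : u₁ ∈ Uset f S) (h2 : u₂ ∈ Uset f S) (h12 : u₁ ≠ u₂) : Xp f k u₁ u₂ :=
  Cset_X (U_mem_C h1 hk) (Ne.symm (S_ne_U hk h2)) (Ne.symm h12)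

variable (hminor : ∀ i j : Fin n, i ≠ j → essArity (idMinor f i j) ≤ n - 3)
include hminor

lemma S_small {S : Set (Fin n)} (hS : InvS f S) : S.ncard ≤ n - 3 := by
  obtain ⟨hK1S, u₁, u₂, h12, hu₁, hu₂⟩ := hS
  have hsub : S ⊆ {k : Fin n | k ≠ u₁ ∧ k ≠ u₂ ∧ Xp f k u₁ u₂} := by
    intro k hk
    exact ⟨S_ne_U hk hu₁, S_ne_U hk hu₂, own_X hk hu₁ hu₂ h12⟩
  exact le_trans (Set.ncard_le_ncard hsub (Set.toFinite _)) (Xp_cap hminor h12)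

omit hminor in
lemma NinU {S : Set (Fin n)} {p q : Fin n} (hp : p ∈ Uset f S) (hq : q ∈ Uset f S)
    (hpq : p ≠ q) {ν : Fin n} (hν1 : ν ≠ p) (hν2 : ν ≠ q) (hνX : ¬ Xp f ν p q) :
    ν ∈ Uset f S := by
  intro k hk
  exact absorb (own_X hk hp hq hpq) hpq
    (S_ne_U hk hp) (S_ne_U hk hq) hν1 hν2 hνX

lemma U_third (hn : 3 ≤ n) {S : Set (Fin n)} {u₁ u₂ : Fin n} (h12 : u₁ ≠ u₂)
    (hu₁ : u₁ ∈ Uset f S) (hu₂ : u₂ ∈ Uset f S) :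
    ∃ u₃, u₃ ∈ Uset f S ∧ u₃ ≠ u₁ ∧ u₃ ≠ u₂ := by
  obtain ⟨ν, hν1, hν2, hνX⟩ := Nex hn hminor h12
  exact ⟨ν, NinU hu₁ hu₂ h12 hν1 hν2 hνX, hν1, hν2⟩

omit hminor in
lemma pick_avoid {u₁ u₂ u₃ a b : Fin n} (h12 : u₁ ≠ u₂) (h31 : u₃ ≠ u₁) (h32 : u₃ ≠ u₂)
    {S : Set (Fin n)} (hu₁ : u₁ ∈ Uset f S) (hu₂ : u₂ ∈ Uset f S) (hu₃ : u₃ ∈ Uset f S) :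
    ∃ w, w ∈ Uset f S ∧ w ≠ a ∧ w ≠ b := by
  rcases eq_or_ne u₁ a with rfl | h1a
  · rcases eq_or_ne u₂ b with rfl | h2b
    · exact ⟨u₃, hu₃, h31, h32⟩
    · exact ⟨u₂, hu₂, Ne.symm h12, h2b⟩
  · rcases eq_or_ne u₁ b with rfl | h1b
    · rcases eq_or_ne u₂ a with rfl | h2a
      · exact ⟨u₃, hu₃, h32, h31⟩
      · exact ⟨u₂, hu₂, h2a, Ne.symm h12⟩
    · exact ⟨u₁, hu₁, h1a, h1b⟩

variable (hn4 : 4 ≤ n) (hall : ∀ p : Fin n, EssAtOn f (Aneq A n) p)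
include hn4 hall

lemma growth {S : Set (Fin n)} (hS : InvS f S) :
    ∃ S' : Set (Fin n), InvS f S' ∧ S'.ncard = S.ncard + 1 := by
  have hn3 : 3 ≤ n := by omega
  obtain ⟨hK1S, u₁, u₂, h12, hu₁, hu₂⟩ := hS
  obtain ⟨u₃, hu₃U, h31, h32⟩ := U_third hminor hn3 h12 hu₁ hu₂
  by_cases hzex : ∃ z, z ∉ S ∧ z ∉ Uset f S
  · -- z-mode
    obtain ⟨z, hzS, hzU⟩ := hzex
    have hz1 : z ≠ u₁ := fun h => hzU (h ▸ hu₁)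
    have hz2 : z ≠ u₂ := fun h => hzU (h ▸ hu₂)
    have hXz : Xp f z u₁ u₂ := by
      by_contra hcon
      exact hzU (NinU hu₁ hu₂ h12 hz1 hz2 hcon)
    obtain ⟨ν₁, hν₁1, hν₁2, hν₁X⟩ := Nex hn3 hminor h12
    have hν₁C : ν₁ ∈ Cset f z := absorb hXz h12 hz1 hz2 hν₁1 hν₁2 hν₁X
    have hν₁U : ν₁ ∈ Uset f S := NinU hu₁ hu₂ h12 hν₁1 hν₁2 hν₁X
    have h1ν : u₁ ≠ ν₁ := Ne.symm hν₁1
    have hzν₁ : z ≠ ν₁ := fun h => hzU (h ▸ hν₁U)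
    have hXz2 : Xp f z u₁ ν₁ := by
      by_contra hcon
      exact hzU (NinU hu₁ hν₁U h1ν hz1 hzν₁ hcon)
    obtain ⟨ν₂, hν₂1, hν₂2, hν₂X⟩ := Nex hn3 hminor h1ν
    have hν₂C : ν₂ ∈ Cset f z := absorb hXz2 h1ν hz1 hzν₁ hν₂1 hν₂2 hν₂X
    have hν₂U : ν₂ ∈ Uset f S := NinU hu₁ hν₁U h1ν hν₂1 hν₂2 hν₂X
    refine ⟨insert z S, ⟨?_, ν₁, ν₂, Ne.symm hν₂2, ?_, ?_⟩, ?_⟩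
    · intro k hk
      rcases hk with rfl | hk
      · exact ⟨u₁, u₂, h12, hz1, hz2, hXz⟩
      · exact hK1S k hk
    · intro k hk
      rcases hk with rfl | hk
      · exact hν₁C
      · exact hν₁U k hk
    · intro k hk
      rcases hk with rfl | hk
      · exact hν₂C
      · exact hν₂U k hk
    · rw [Set.ncard_insert_of_notMem hzS (Set.toFinite _)]
  · push_neg at hzex
    by_cases h2a : ∃ u v, u ∈ Uset f S ∧ v ∈ Cset f u ∧ v ∈ Uset f S
    · -- u-mode
      obtain ⟨u, v, huU, hvC, hvU⟩ := h2a
      have hvu : v ≠ u := Cset_ne hvC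
      have huS : u ∉ S := by
        intro h
        exact (Cset_ne (U_mem_C huU h)) rfl
      obtain ⟨w, hwU, hwu, hwv⟩ := pick_avoid h12 h31 h32 hu₁ hu₂ hu₃U (a := u) (b := v)
      have hXuvw : Xp f u v w := Cset_X hvC hwu hwv
      have hvw : v ≠ w := Ne.symm hwv
      have huv : u ≠ v := Ne.symm hvu
      have huw : u ≠ w := Ne.symm hwu
      obtain ⟨ν₁, hν₁1, hν₁2, hν₁X⟩ := Nex hn3 hminor hvw
      have hν₁C : ν₁ ∈ Cset f u := absorb hXuvw hvw huv huw hν₁1 hν₁2 hν₁X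
      have hν₁U : ν₁ ∈ Uset f S := NinU hvU hwU hvw hν₁1 hν₁2 hν₁X
      have hvν : v ≠ ν₁ := Ne.symm hν₁1
      have hX2 : Xp f u v ν₁ := Cset_X hvC (Cset_ne hν₁C) hν₁1
      obtain ⟨ν₂, hν₂1, hν₂2, hν₂X⟩ := Nex hn3 hminor hvν
      have hν₂C : ν₂ ∈ Cset f u := absorb hX2 hvν huv (Ne.symm (Cset_ne hν₁C)) hν₂1 hν₂2 hν₂X
      have hν₂U : ν₂ ∈ Uset f S := NinU hvU hν₁U hvν hν₂1 hν₂2 hν₂X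
      refine ⟨insert u S, ⟨?_, ν₁, ν₂, Ne.symm hν₂2, ?_, ?_⟩, ?_⟩
      · intro k hk
        rcases hk with rfl | hk
        · exact ⟨v, w, hvw, huv, huw, hXuvw⟩
        · exact hK1S k hk
      · intro k hk
        rcases hk with rfl | hk
        · exact hν₁C
        · exact hν₁U k hk
      · intro k hk
        rcases hk with rfl | hk
        · exact hν₂C
        · exact hν₂U k hk
      · rw [Set.ncard_insert_of_notMem huS (Set.toFinite _)]
    · -- stuck state : derive False
      exfalso
      push_neg at h2a
      by_cases hK : ∃ u u', u ∈ Uset f S ∧ u' ∈ Uset f S ∧ u ≠ u' ∧ K1 f u ∧ K1 f u'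
      · -- case (a) : two K1 elements in U
        obtain ⟨u, u', huU, hu'U, huu', hKu, hKu'⟩ := hK
        obtain ⟨c, hcu, hcu'⟩ := pairwise_C hminor hn3 huu' hKu hKu'
        have hcS : c ∈ S := by
          by_contra h
          exact h2a u c huU hcu (hzex c h)
        obtain ⟨w, hwU, hwu, hwu'⟩ := pick_avoid h12 h31 h32 hu₁ hu₂ hu₃U (a := u) (b := u')
        have hcw : c ≠ w := S_ne_U hcS hwU
        have hwc : w ≠ c := Ne.symm hcw
        have hXucw : Xp f u c w := Cset_X hcu hwu hwc
        obtain ⟨ν, hνc, hνw, hνX⟩ := Nex hn3 hminor hcw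
        have hνCu : ν ∈ Cset f u :=
          absorb hXucw hcw (Ne.symm (Cset_ne hcu)) (Ne.symm hwu) hνc hνw hνX
        have hνnU : ν ∉ Uset f S := h2a u ν huU hνCu
        have hνS : ν ∈ S := by
          by_contra h
          exact hνnU (hzex ν h)
        have : Xp f ν c w := Xp_symm (Cset_X (U_mem_C hwU hνS) (Ne.symm hνc) hcw)
        exact hνX this
      · -- case (b) : at most one K1 element in U
        push_neg at hK
        obtain ⟨kk, hkkU, hkkK⟩ : ∃ kk, kk ∈ Uset f S ∧ ¬ K1 f kk := by
          by_contra h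
          push_neg at h
          exact hK u₁ u₂ hu₁ hu₂ h12 (h u₁ hu₁) (h u₂ hu₂)
        rcases coverage hn3 (hall kk) with hL | ⟨r, s, hrs, hkr, hks, hchain⟩
        · exact hkkK hL
        · have hdia : ∀ t, t ≠ kk → t ≠ r → t ≠ s → (Xp f t kk r ∨ Xp f t kk s) := by
            intro t h1 h2 h3
            rcases (hchain t h1 h2 h3).1 with h | h | h
            · exact Or.inl h
            · exact Or.inr h
            · exact absurd ⟨t, r, h2, Ne.symm h1, hkr, h⟩ hkkK
          by_cases hx : ∃ x, x ∈ Uset f S ∧ x ≠ kk ∧ x ≠ r ∧ x ≠ s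
          · -- an element of U outside {kk, r, s}
            obtain ⟨x, hxU, hxk, hxr, hxs⟩ := hx
            have key : ∀ ξ : Fin n, kk ≠ ξ → x ≠ ξ → Xp f x kk ξ → False := by
              intro ξ hkξ hxξ hXx
              obtain ⟨ν, hν1, hν2, hνX⟩ := Nex hn3 hminor hkξ
              have hνCx : ν ∈ Cset f x := absorb hXx hkξ hxk hxξ hν1 hν2 hνX
              have hνnU : ν ∉ Uset f S := h2a x ν hxU hνCx
              have hνS : ν ∈ S := by
                by_contra h
                exact hνnU (hzex ν h)
              exact hνX (Cset_X (U_mem_C hkkU hνS) (Ne.symm hν2) (Ne.symm hkξ))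
            rcases hdia x hxk hxr hxs with hXx | hXx
            · exact key r hkr hxr hXx
            · exact key s hks hxs hXx
          · -- U ⊆ {kk, r, s}
            push_neg at hx
            have hsub : ∀ x, x ∈ Uset f S → x = kk ∨ x = r ∨ x = s := by
              intro x hxU
              by_contra hcc
              push_neg at hcc
              exact hcc.2.2 (hx x hxU hcc.1 hcc.2.1)
            obtain ⟨hrA, hsA⟩ := attain3 h12 h31 h32 (hsub u₁ hu₁) (hsub u₂ hu₂)
              (hsub u₃ hu₃U)
            have hrU : r ∈ Uset f S := by
              rcases hrA with h | h | h
              · exact h ▸ hu₁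
              · exact h ▸ hu₂
              · exact h ▸ hu₃U
            have hsU : s ∈ Uset f S := by
              rcases hsA with h | h | h
              · exact h ▸ hu₁
              · exact h ▸ hu₂
              · exact h ▸ hu₃U
            obtain ⟨t₀, ht₀k, ht₀r, ht₀s⟩ := exists_notin₃ hn4 kk r s
            have ht₀S : t₀ ∈ S := by
              by_contra h
              rcases hsub t₀ (hzex t₀ h) with h' | h' | h'
              · exact ht₀k h'
              · exact ht₀r h'
              · exact ht₀s h'
            rcases (hchain t₀ ht₀k ht₀r ht₀s).2 with hB | hB | hB | hB | hB
            · -- Xp s kk r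
              obtain ⟨ν, hν1, hν2, hνX⟩ := Nex hn3 hminor hkr
              by_cases hνS : ν ∈ S
              · exact hνX (Cset_X (U_mem_C hkkU hνS) (Ne.symm hν2) (Ne.symm hkr))
              · rcases hsub ν (hzex ν hνS) with rfl | rfl | rfl
                · exact hν1 rfl
                · exact hν2 rfl
                · exact hνX hB
            · -- Xp kk r s : K1 kk
              exact hkkK ⟨r, s, hrs, hkr, hks, hB⟩
            · -- Xp s kk t₀
              have hkt : kk ≠ t₀ := Ne.symm ht₀k
              obtain ⟨ν, hν1, hν2, hνX⟩ := Nex hn3 hminor hkt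
              have hνCs : ν ∈ Cset f s :=
                absorb hB hkt (Ne.symm hks) (Ne.symm ht₀s) hν1 hν2 hνX
              have hνnU : ν ∉ Uset f S := h2a s ν hsU hνCs
              by_cases hνS : ν ∈ S
              · exact hνX (Cset_X (U_mem_C hkkU hνS) (Ne.symm hν2) (Ne.symm hkt))
              · rcases hsub ν (hzex ν hνS) with rfl | rfl | rfl
                · exact hν1 rfl
                · exact hνnU hrU
                · exact (Cset_ne hνCs) rfl
            · -- Xp r kk t₀
              have hkt : kk ≠ t₀ := Ne.symm ht₀k
              obtain ⟨ν, hν1, hν2, hνX⟩ := Nex hn3 hminor hkt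
              have hνCr : ν ∈ Cset f r :=
                absorb hB hkt (Ne.symm hkr) (Ne.symm ht₀r) hν1 hν2 hνX
              have hνnU : ν ∉ Uset f S := h2a r ν hrU hνCr
              by_cases hνS : ν ∈ S
              · exact hνX (Cset_X (U_mem_C hkkU hνS) (Ne.symm hν2) (Ne.symm hkt))
              · rcases hsub ν (hzex ν hνS) with rfl | rfl | rfl
                · exact hν1 rfl
                · exact (Cset_ne hνCr) rfl
                · exact hνnU hsU
            · -- Xp r kk s
              obtain ⟨ν, hν1, hν2, hνX⟩ := Nex hn3 hminor hks
              by_cases hνS : ν ∈ S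
              · exact hνX (Cset_X (U_mem_C hkkU hνS) (Ne.symm hν2) (Ne.symm hks))
              · rcases hsub ν (hzex ν hνS) with rfl | rfl | rfl
                · exact hν1 rfl
                · exact hνX hB
                · exact hν2 rfl

lemma base_K1 : ∃ k₀ : Fin n, K1 f k₀ := by
  have hn3 : 3 ≤ n := by omega
  have k : Fin n := ⟨0, by omega⟩
  rcases coverage hn3 (hall k) with hL | ⟨r, s, hrs, hkr, hks, hchain⟩
  · exact ⟨k, hL⟩
  · obtain ⟨t, htk, htr, hts⟩ := exists_notin₃ hn4 k r s
    rcases (hchain t htk htr hts).1 with h | h | h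
    · exact ⟨t, k, r, hkr, htk, htr, h⟩
    · exact ⟨t, k, s, hks, htk, hts, h⟩
    · exact ⟨k, t, r, htr, Ne.symm htk, hkr, h⟩

lemma final_contradiction : False := by
  have hn3 : 3 ≤ n := by omega
  obtain ⟨k₀, hk₀⟩ := base_K1 hminor hn4 hall
  have P : ∀ j : ℕ, ∃ S : Set (Fin n), InvS f S ∧ S.ncard = j + 1 := by
    intro j
    induction j with
    | zero =>
      refine ⟨{k₀}, ⟨?_, ?_⟩, by simp⟩
      · intro k hk
        rw [Set.mem_singleton_iff] at hk
        exact hk ▸ hk₀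
      · obtain ⟨c₁, c₂, h12, h1, h2⟩ := rich hminor hn3 hk₀
        refine ⟨c₁, c₂, h12, ?_, ?_⟩ <;>
          · intro k hk
            rw [Set.mem_singleton_iff] at hk
            subst hk
            assumption
    | succ j ih =>
      obtain ⟨S, hS, hcard⟩ := ih
      obtain ⟨S', hS', hcard'⟩ := growth hminor hn4 hall hS
      exact ⟨S', hS', by omega⟩
  obtain ⟨S, hS, hcard⟩ := P (n - 3)
  have := S_small hminor hS
  omega

end Main

section Core
variable {A B : Type*} {n : ℕ}

theorem core_lemma [Fintype A] (h2 : 2 ≤ Fintype.card A) (hn : 3 ≤ n)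
    (f : (Fin n → A) → B)
    (hminor : ∀ i j : Fin n, i ≠ j → essArity (idMinor f i j) ≤ n - 3) :
    ∃ p : Fin n, ¬ EssAtOn f (Aneq A n) p := by
  by_cases hn4 : 4 ≤ n
  · by_contra h
    push_neg at h
    exact final_contradiction hminor hn4 h
  · have hA : Nonempty A := by
      have : 0 < Fintype.card A := by omega
      exact Fintype.card_pos_iff.mp this
    have h0 : ∀ i j : Fin n, i ≠ j → essArity (idMinor f i j) = 0 := by
      intro i j hij
      have := hminor i j hij
      omega
    exact ⟨⟨0, by omega⟩, core_n3 hA hn h0 _⟩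

/-- P3 : all minors small implies quasi-arity < n. -/
lemma qarity_lt_of_minors_small [Fintype A] (h2 : 2 ≤ Fintype.card A) (hn : 3 ≤ n)
    (f : (Fin n → A) → B)
    (hminor : ∀ i j : Fin n, i ≠ j → essArity (idMinor f i j) ≤ n - 3) :
    qarity f < n := by
  obtain ⟨p, hp⟩ := core_lemma h2 hn f hminor
  rw [not_essAtOn_iff] at hp
  have hcard : 1 < Fintype.card (Fin n) := by simp; omega
  obtain ⟨q, hq⟩ := Fintype.exists_ne_of_one_lt_card hcard p
  have hsupp : IsSupport f (idMinor f p q) := by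
    intro a ha
    unfold idMinor
    exact hp _ _ (update_mem_aneq a (Ne.symm hq)) ha
      (fun l hl => Function.update_of_ne hl _ _)
  have hle : essArity (idMinor f p q) ≤ n - 1 := by
    have hsub : {k : Fin n | EssAt (idMinor f p q) k} ⊆ Set.univ \ {p} := by
      intro k hk
      refine ⟨Set.mem_univ k, ?_⟩
      simp only [Set.mem_singleton_iff]
      intro h
      exact not_essAt_idMinor_self f (Ne.symm hq) (h ▸ hk)
    have hcard2 : Set.ncard (Set.univ \ {p} : Set (Fin n)) = n - 1 := by
      rw [Set.ncard_diff (by simp) (Set.toFinite _), Set.ncard_univ, Set.ncard_singleton]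
      simp
    calc essArity (idMinor f p q) ≤ Set.ncard (Set.univ \ {p} : Set (Fin n)) :=
          Set.ncard_le_ncard hsub (Set.toFinite _)
      _ = n - 1 := hcard2
  have := qarity_le f _ hsupp
  omega

end Core

theorem stmt12 {A B : Type*} [Fintype A] (h2 : 2 ≤ Fintype.card A) {n m : ℕ}
    (hm : m + 3 ≤ n) (f : (Fin n → A) → B) (hdep : ∀ i : Fin n, EssAt f i) :
    arityGap f = n - m ↔ qarity f = m := by
  have hn3 : 3 ≤ n := by omega
  have hessf : essArity f = n := essArity_eq_of_dep f hdep
  set D : Set ℕ := {d | ∃ i j : Fin n, i ≠ j ∧ EssAt f i ∧ EssAt f j ∧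
    d = essArity f - essArity (idMinor f i j)} with hD
  have hgap : arityGap f = sInf D := rfl
  have h01 : (⟨0, by omega⟩ : Fin n) ≠ (⟨1, by omega⟩ : Fin n) := by
    intro h
    have := congrArg Fin.val h
    simp at this
  have hDne : D.Nonempty :=
    ⟨essArity f - essArity (idMinor f ⟨0, by omega⟩ ⟨1, by omega⟩), ⟨0, by omega⟩,
      ⟨1, by omega⟩, h01, hdep _, hdep _, rfl⟩
  have hminor_le : ∀ i j : Fin n, i ≠ j → essArity (idMinor f i j) ≤ n - 1 := by
    intro i j hij
    have hsub : {k : Fin n | EssAt (idMinor f i j) k} ⊆ Set.univ \ {i} := by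
      intro k hk
      refine ⟨Set.mem_univ k, ?_⟩
      simp only [Set.mem_singleton_iff]
      intro h
      exact not_essAt_idMinor_self f hij (h ▸ hk)
    have hcard2 : Set.ncard (Set.univ \ {i} : Set (Fin n)) = n - 1 := by
      rw [Set.ncard_diff (by simp) (Set.toFinite _), Set.ncard_univ, Set.ncard_singleton]
      simp
    calc essArity (idMinor f i j) ≤ _ := Set.ncard_le_ncard hsub (Set.toFinite _)
      _ = n - 1 := hcard2
  constructor
  · -- gap = n - m → qa = m
    intro hg
    rw [hgap] at hg
    have hmem := Nat.sInf_mem hDne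
    rw [hg] at hmem
    obtain ⟨i₀, j₀, hij₀, _, _, hd₀⟩ := hmem
    rw [hessf] at hd₀
    have he₀ : essArity (idMinor f i₀ j₀) = m := by
      have := hminor_le i₀ j₀ hij₀
      omega
    have hall : ∀ i j : Fin n, i ≠ j → essArity (idMinor f i j) ≤ m := by
      intro i j hij
      have hmem2 : (essArity f - essArity (idMinor f i j)) ∈ D :=
        ⟨i, j, hij, hdep i, hdep j, rfl⟩
      have := Nat.sInf_le hmem2
      rw [hg, hessf] at this
      have := hminor_le i j hij
      omega
    have hq_lt : qarity f < n :=
      qarity_lt_of_minors_small h2 hn3 f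
        (fun i j hij => le_trans (hall i j hij) (by omega))
    obtain ⟨i₁, j₁, hij₁, he₁⟩ := exists_minor_eq_qarity f (by omega) hq_lt
    have h1 : qarity f ≤ m := he₁ ▸ hall i₁ j₁ hij₁
    have h2' : m ≤ qarity f := he₀ ▸ minor_le_qarity f hij₀
    omega
  · -- qa = m → gap = n - m
    intro hq
    have hall : ∀ i j : Fin n, i ≠ j → essArity (idMinor f i j) ≤ m := by
      intro i j hij
      have := minor_le_qarity f hij
      omega
    have hq_lt : qarity f < n := by omega
    obtain ⟨i₁, j₁, hij₁, he₁⟩ := exists_minor_eq_qarity f (by omega) hq_lt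
    rw [hq] at he₁
    rw [hgap]
    apply le_antisymm
    · have hmem : (n - m) ∈ D := by
        refine ⟨i₁, j₁, hij₁, hdep i₁, hdep j₁, ?_⟩
        rw [hessf, he₁]
      exact Nat.sInf_le hmem
    · apply le_csInf hDne
      intro d hd
      obtain ⟨i, j, hij, _, _, hdd⟩ := hd
      rw [hessf] at hdd
      have := hall i j hij
      omega
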